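/- arXiv:2507.16448 — 2 statements merged into one kernel-verified Lean document; each statement's English description precedes it below -/
import Mathlib

section
/- (Duality between survival paths and reversed first passage.) Assume the environment chain is stationary with distribution π. Then for every initial surplus x ∈ ℕ, every n ≥ 1 and every integer m with 1 ≤ m ≤ x+n: P_π( X_k > 0 for all 0 < k < n, and X_n = m | X_0 = x ) = P_π( τ̃_m^+ ≥ n and X̃_n = m − x ), where the left side is computed in the compound Markov binomial model with initial surplus x and the right side in the time-reversed model (both with initial distribution π). -/
open scoped BigOperators

noncomputable section

namespace CMB

/-- The weight that the compound Markov binomial model with horizon `n`, jump matrices `Λ`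
and initial distribution `μ` assigns to the path `(J, C)`. -/
def pathWeight {N : ℕ} (Λ : ℕ → Matrix (Fin N) (Fin N) ℝ) (μ : Fin N → ℝ) (n : ℕ)
    (J : Fin (n + 1) → Fin N) (C : Fin n → ℕ) : ℝ :=
  μ (J 0) * ∏ k : Fin n, Λ (C k) (J k.castSucc) (J k.succ)

/-- The probability of the event `A` in the horizon-`n` compound Markov binomial model:
the sum of the weights of the paths belonging to the event. -/
def prob {N : ℕ} (Λ : ℕ → Matrix (Fin N) (Fin N) ℝ) (μ : Fin N → ℝ) (n : ℕ)
    (A : (Fin (n + 1) → Fin N) → (Fin n → ℕ) → Prop) : ℝ :=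
  ∑' p : { p : (Fin (n + 1) → Fin N) × (Fin n → ℕ) // A p.1 p.2 },
    pathWeight Λ μ n p.1.1 p.1.2

/-- Partial sums `S_k = C_1 + ⋯ + C_k` of the claims (`C i` is claim number `i+1`). -/
def S {n : ℕ} (C : Fin n → ℕ) (k : ℕ) : ℕ :=
  ∑ j : Fin n, if (j : ℕ) < k then C j else 0

/-- Jump matrices `Λ̃(m)`, with `λ̃_{ij}(m) = (π_j/π_i)·λ_{ji}(m)`, of the time-reversed model. -/
def lamTilde {N : ℕ} (Λ : ℕ → Matrix (Fin N) (Fin N) ℝ) (π : Fin N → ℝ) :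
    ℕ → Matrix (Fin N) (Fin N) ℝ := fun m i j => π j / π i * Λ m j i


/-- Telescoping product of ratios. -/
lemma prod_ratio {n : ℕ} (f : Fin (n+1) → ℝ) (hf : ∀ i, f i ≠ 0) :
    ∏ k : Fin n, f k.succ / f k.castSucc = f (Fin.last n) / f 0 := by
  induction n with
  | zero => simp [div_self (hf 0)]
  | succ n ih =>
    rw [Fin.prod_univ_succ]
    have h : ∀ k : Fin n, f k.succ.succ / f k.succ.castSucc
        = (f ∘ Fin.succ) k.succ / (f ∘ Fin.succ) k.castSucc := by
      intro k; simp only [Function.comp_apply, Fin.succ_castSucc]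
    simp_rw [h]
    rw [ih (f ∘ Fin.succ) (fun i => hf _)]
    simp only [Function.comp_apply, Fin.succ_last]
    rw [div_mul_div_comm, mul_comm (f (Fin.succ 0)), ← div_mul_div_comm,
      div_self (hf _)]
    simp

lemma S_zero {n : ℕ} (C : Fin n → ℕ) : S C 0 = 0 := by simp [S]

lemma S_rev {n : ℕ} (C : Fin n → ℕ) (k : ℕ) (hk : k ≤ n) :
    S (fun j => C j.rev) k + S C (n - k) = S C n := by
  have h1 : S (fun j => C j.rev) k
      = ∑ j : Fin n, if n - 1 - (j : ℕ) < k then C j else 0 := by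
    unfold S
    apply Fintype.sum_bijective Fin.rev Fin.rev_bijective
    intro j
    have hv : ((Fin.rev j : Fin n) : ℕ) = n - 1 - (j : ℕ) := by
      rw [Fin.val_rev]; omega
    have hj : (j : ℕ) < n := j.isLt
    rw [hv]
    have h2 : n - 1 - (n - 1 - (j : ℕ)) = (j : ℕ) := by omega
    rw [h2]
  rw [h1]
  unfold S
  rw [← Finset.sum_add_distrib]
  apply Finset.sum_congr rfl
  intro j _
  have hj : (j : ℕ) < n := j.isLt
  by_cases h : n - 1 - (j : ℕ) < k
  · rw [if_pos h, if_neg (by omega), if_pos hj, add_zero]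
  · rw [if_neg h, if_pos (by omega), if_pos hj, zero_add]

lemma pathWeight_rev {N n : ℕ} (Λ : ℕ → Matrix (Fin N) (Fin N) ℝ) (π : Fin N → ℝ)
    (hπpos : ∀ i, 0 < π i) (J : Fin (n+1) → Fin N) (C : Fin n → ℕ) :
    pathWeight (lamTilde Λ π) π n J C
      = pathWeight Λ π n (fun i => J i.rev) (fun k => C k.rev) := by
  unfold pathWeight lamTilde
  rw [Finset.prod_mul_distrib, prod_ratio (fun i => π (J i)) (fun i => (hπpos _).ne')]
  have hrev : ∏ k : Fin n, Λ (C k) (J k.succ) (J k.castSucc)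
      = ∏ k : Fin n, Λ (C k.rev) (J k.castSucc.rev) (J k.succ.rev) := by
    apply Fintype.prod_bijective Fin.rev Fin.rev_bijective
    intro k
    have h1 : (Fin.rev k).castSucc.rev = k.succ := by ext; simp [Fin.val_rev]; omega
    have h2 : (Fin.rev k).succ.rev = k.castSucc := by ext; simp [Fin.val_rev]; omega
    rw [Fin.rev_rev, h1, h2]
  rw [← mul_assoc, mul_div_assoc', mul_comm (π (J 0)), mul_div_assoc,
    div_self (hπpos (J 0)).ne', mul_one, hrev]
  simp [Fin.rev_zero]

/-- Duality between survival paths and reversed first passage.  Assume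
the environment chain stationary with distribution `π`.  For every `x`, `n ≥ 1` and
`1 ≤ m ≤ x + n`,
`P_π(X_k > 0 ∀ 0 < k < n, X_n = m | X_0 = x) = P_π(τ̃_m^+ ≥ n, X̃_n = m − x)`,
where `{τ̃_m^+ ≥ n} = {X̃_k < m ∀ k < n}`. -/
theorem survival_reversal_duality
    {N : ℕ} (hN : 1 ≤ N)
    (Λ : ℕ → Matrix (Fin N) (Fin N) ℝ) (P : Matrix (Fin N) (Fin N) ℝ)
    (hΛ : ∀ m i j, 0 ≤ Λ m i j)
    (hP : ∀ i j, HasSum (fun m => Λ m i j) (P i j))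
    (hPstoch : ∀ i, ∑ j, P i j = 1)
    (π : Fin N → ℝ) (hπpos : ∀ i, 0 < π i) (hπsum : ∑ i, π i = 1)
    (hπP : ∀ j, ∑ i, π i * P i j = π j)
    (x n m : ℕ) (hn : 1 ≤ n) (hm : 1 ≤ m) (hmx : m ≤ x + n) :
    prob Λ π n (fun _J C =>
        (∀ k, 0 < k → k < n → 0 < (x : ℤ) + k - S C k) ∧ (x : ℤ) + n - S C n = m) =
      prob (lamTilde Λ π) π n (fun _J C =>
        (∀ k, k < n → (k : ℤ) - S C k < (m : ℤ)) ∧ (n : ℤ) - S C n = (m : ℤ) - x) := by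
  classical
  -- the reversal equivalence on paths
  set e : ((Fin (n + 1) → Fin N) × (Fin n → ℕ)) ≃ ((Fin (n + 1) → Fin N) × (Fin n → ℕ)) :=
    { toFun := fun p => (fun i => p.1 i.rev, fun k => p.2 k.rev)
      invFun := fun p => (fun i => p.1 i.rev, fun k => p.2 k.rev)
      left_inv := by intro p; ext <;> simp
      right_inv := by intro p; ext <;> simp } with he
  have key : ∀ C : Fin n → ℕ,
      ((∀ k, k < n → (k : ℤ) - S C k < (m : ℤ)) ∧ (n : ℤ) - S C n = (m : ℤ) - x) ↔
      ((∀ k, 0 < k → k < n → 0 < (x : ℤ) + k - S (fun j => C j.rev) k) ∧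
        (x : ℤ) + n - S (fun j => C j.rev) n = m) := by
    intro C
    have hn0 : S (fun j => C j.rev) n + S C 0 = S C n := by
      have := S_rev C n le_rfl; simpa using this
    have hz : S C 0 = 0 := S_zero C
    constructor
    · rintro ⟨h1, h2⟩
      refine ⟨?_, by omega⟩
      intro k hk0 hkn
      have e1 := S_rev C k hkn.le
      have e2 := h1 (n - k) (by omega)
      omega
    · rintro ⟨h1, h2⟩
      refine ⟨?_, by omega⟩
      intro k hkn
      rcases Nat.eq_zero_or_pos k with hk | hk
      · subst hk
        have := S_zero C
        omega
      · have e1 := S_rev C (n - k) (by omega)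
        have hnk : n - (n - k) = k := by omega
        rw [hnk] at e1
        have e2 := h1 (n - k) (by omega) (by omega)
        omega
  unfold prob
  rw [← Equiv.tsum_eq (Equiv.subtypeEquiv
      (p := fun p : (Fin (n + 1) → Fin N) × (Fin n → ℕ) =>
        (∀ k, k < n → (k : ℤ) - S p.2 k < (m : ℤ)) ∧ (n : ℤ) - S p.2 n = (m : ℤ) - x)
      (q := fun p : (Fin (n + 1) → Fin N) × (Fin n → ℕ) =>
        (∀ k, 0 < k → k < n → 0 < (x : ℤ) + k - S p.2 k) ∧ (x : ℤ) + n - S p.2 n = m)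
      e (fun p => key p.2)) (fun q => pathWeight Λ π n q.1.1 q.1.2)]
  apply tsum_congr
  intro p
  simp only [Equiv.subtypeEquiv_apply, he, Equiv.coe_fn_mk]
  exact (pathWeight_rev Λ π hπpos p.1.1 p.1.2).symm


end CMB
end
end

section
/- (First-passage decomposition for the reversed process.) Assume the environment chain is stationary with distribution π. Then for every x ∈ ℕ, every n ≥ 1 and every integer m with 1 ≤ m ≤ x+n: P_π( τ̃_m^+ ≥ n and X̃_n = m − x ) = π·Λ^{*n}(n+x−m)·e − Σ_{k=m}^{n−1} π·Λ^{*(n−k)}(n+x−k)·V(k, m)·e. -/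
open scoped BigOperators ENNReal

noncomputable section

namespace CMB

/-- Dirac initial distribution `δ_i`. -/
def delta {N : ℕ} (i : Fin N) : Fin N → ℝ := fun i' => if i' = i then 1 else 0

/-- `hitM Λ n a i j` is the probability, in the model with initial distribution `δ_i` and
initial surplus `x = 0` (so `X_k = k - S_k`), of the event `{τ_a^+ = n, J_n = j}`,
i.e. `X_k < a` for all `k < n` and `X_n ≥ a` and `J_n = j`. -/
def hitM {N : ℕ} (Λ : ℕ → Matrix (Fin N) (Fin N) ℝ) (n a : ℕ) : Matrix (Fin N) (Fin N) ℝ :=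
  fun i j => prob Λ (delta i) n fun J C =>
    (∀ k, k < n → (k : ℤ) - S C k < (a : ℤ)) ∧ (a : ℤ) ≤ (n : ℤ) - S C n ∧ J (Fin.last n) = j

/-- `conv Λ n` is the `n`-fold matrix convolution `Λ^{*n}`. -/
def conv {N : ℕ} (Λ : ℕ → Matrix (Fin N) (Fin N) ℝ) : ℕ → ℕ → Matrix (Fin N) (Fin N) ℝ
  | 0, m => if m = 0 then 1 else 0
  | n + 1, m => ∑ k ∈ Finset.range (m + 1), conv Λ n k * Λ (m - k)

/-- `V(n,a) := Δ_π⁻¹ · M̃(n,a)ᵀ · Δ_π`, where `M̃(n,a)` is the matrix of first-passage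
probabilities of the time-reversed model. -/
def Vmat {N : ℕ} (Λ : ℕ → Matrix (Fin N) (Fin N) ℝ) (π : Fin N → ℝ) (n a : ℕ) :
    Matrix (Fin N) (Fin N) ℝ := fun i j => π j / π i * hitM (lamTilde Λ π) n a j i

lemma S_mono {n : ℕ} (C : Fin n → ℕ) {a b : ℕ} (h : a ≤ b) : S C a ≤ S C b := by
  refine Finset.sum_le_sum fun j _ => ?_
  by_cases hj : (j:ℕ) < a
  · simp [hj, lt_of_lt_of_le hj h]
  · simp only [hj, if_neg]; positivity

lemma S_full {n : ℕ} (C : Fin n → ℕ) : S C n = ∑ t, C t := by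
  refine Finset.sum_congr rfl fun j _ => ?_
  simp [j.is_lt]

lemma S_castAdd {k r : ℕ} (C : Fin (k + r) → ℕ) {l : ℕ} (hl : l ≤ k) :
    S (fun t : Fin k => C (Fin.castAdd r t)) l = S C l := by
  rw [S, S, Fin.sum_univ_add]
  have h2 : ∑ j : Fin r, (if ((Fin.natAdd k j : Fin (k+r)) : ℕ) < l then C (Fin.natAdd k j) else 0) = 0 := by
    refine Finset.sum_eq_zero fun j _ => ?_
    have hn : ¬ ((Fin.natAdd k j : Fin (k+r)) : ℕ) < l := by
      simp only [Fin.coe_natAdd]; omega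
    rw [if_neg hn]
  rw [h2, add_zero]
  refine Finset.sum_congr rfl fun j _ => ?_
  simp [Fin.coe_castAdd]

set_option linter.constructorNameAsVariable false in
lemma triangle_swap {γ : Type*} [AddCommMonoid γ] (m : ℕ) (h : ℕ → ℕ → γ) :
    ∑ k ∈ Finset.range (m+1), ∑ l ∈ Finset.range (k+1), h l (k - l)
      = ∑ l ∈ Finset.range (m+1), ∑ j ∈ Finset.range (m - l + 1), h l j := by
  induction m with
  | zero => simp
  | succ m ih =>
    rw [Finset.sum_range_succ, ih]
    rw [Finset.sum_range_succ (fun l => ∑ j ∈ Finset.range (m + 1 - l + 1), h l j)]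
    have key : ∀ l ∈ Finset.range (m+1), ∑ j ∈ Finset.range (m + 1 - l + 1), h l j
        = ∑ j ∈ Finset.range (m - l + 1), h l j + h l (m + 1 - l) := by
      intro l hl
      rw [Finset.mem_range] at hl
      have h1 : m + 1 - l + 1 = (m - l + 1) + 1 := by omega
      rw [h1, Finset.sum_range_succ]
      congr 2
      omega
    rw [Finset.sum_congr rfl key, Finset.sum_add_distrib]
    have hlast : ∑ j ∈ Finset.range (m + 1 - (m+1) + 1), h (m+1) j = h (m+1) 0 := by simp
    rw [hlast]
    have h2 : ∑ l ∈ Finset.range (m+1+1), h l (m + 1 - l)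
        = ∑ l ∈ Finset.range (m+1), h l (m + 1 - l) + h (m+1) 0 := by
      rw [Finset.sum_range_succ]; simp
    rw [h2]
    abel


lemma conv_nonneg {Λ : ℕ → Matrix (Fin N) (Fin N) ℝ} (hΛ : ∀ m i j, 0 ≤ Λ m i j)
    (n m : ℕ) (i j : Fin N) : 0 ≤ conv Λ n m i j := by
  induction n generalizing m i j with
  | zero =>
    rw [conv]
    split_ifs with h
    · rw [Matrix.one_apply]; positivity
    · simp
  | succ n ih =>
    rw [conv, Matrix.sum_apply]
    refine Finset.sum_nonneg fun k _ => ?_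
    rw [Matrix.mul_apply]
    exact Finset.sum_nonneg fun l _ => mul_nonneg (ih _ _ _) (hΛ _ _ _)

lemma conv_succ_left (Λ : ℕ → Matrix (Fin N) (Fin N) ℝ) (n m : ℕ) :
    conv Λ (n+1) m = ∑ k ∈ Finset.range (m+1), Λ k * conv Λ n (m - k) := by
  induction n generalizing m with
  | zero =>
    have L : ∀ k ∈ Finset.range (m+1), conv Λ 0 k * Λ (m-k) = if k = 0 then Λ m else 0 := by
      intro k hk
      rw [conv]
      split_ifs with h
      · subst h; simp
      · simp
    have R : ∀ k ∈ Finset.range (m+1), Λ k * conv Λ 0 (m-k) = if k = m then Λ m else 0 := by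
      intro k hk
      rw [Finset.mem_range] at hk
      rw [conv]
      by_cases h : k = m
      · subst h; simp
      · have hne : ¬ (m - k = 0) := by omega
        rw [if_neg hne, if_neg h, mul_zero]
    rw [conv, Finset.sum_congr rfl L, Finset.sum_ite_eq' (Finset.range (m+1)) 0,
      Finset.sum_congr rfl R, Finset.sum_ite_eq' (Finset.range (m+1)) m]
    simp
  | succ n ih =>
    rw [conv]
    have step1 : ∀ k ∈ Finset.range (m+1),
        conv Λ (n+1) k * Λ (m - k)
          = ∑ l ∈ Finset.range (k+1), Λ l * (conv Λ n (k - l) * Λ (m - l - (k - l))) := by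
      intro k hk
      rw [ih k, Finset.sum_mul]
      refine Finset.sum_congr rfl fun l hl => ?_
      rw [Finset.mem_range] at hl
      rw [mul_assoc]
      have e : m - k = m - l - (k - l) := by omega
      rw [e]
    rw [Finset.sum_congr rfl step1,
      triangle_swap m (fun l j => Λ l * (conv Λ n j * Λ (m - l - j)))]
    refine Finset.sum_congr rfl fun l hl => ?_
    rw [conv, Finset.mul_sum]

lemma conv_tilde (Λ : ℕ → Matrix (Fin N) (Fin N) ℝ) (π : Fin N → ℝ) (hπ : ∀ i, π i ≠ 0)
    (n s : ℕ) (i j : Fin N) :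
    conv (lamTilde Λ π) n s i j = π j / π i * conv Λ n s j i := by
  induction n generalizing s i j with
  | zero =>
    rw [conv, conv]
    split_ifs with h
    · rw [Matrix.one_apply, Matrix.one_apply]
      by_cases hij : i = j
      · subst hij; simp [div_self (hπ i)]
      · have : ¬ (j = i) := fun hh => hij hh.symm
        simp [hij, this]
    · simp
  | succ n ih =>
    rw [conv, conv_succ_left, Matrix.sum_apply, Matrix.sum_apply, Finset.mul_sum]
    have refl : ∑ k ∈ Finset.range (s+1), π j / π i * ((Λ k * conv Λ n (s - k)) j i)
        = ∑ k ∈ Finset.range (s+1), π j / π i * ((Λ (s - k) * conv Λ n k) j i) := by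
      have h := Finset.sum_range_reflect
        (fun k => π j / π i * ((Λ k * conv Λ n (s - k)) j i)) (s+1)
      rw [← h]
      refine Finset.sum_congr rfl fun k hk => ?_
      rw [Finset.mem_range] at hk
      have e1 : s + 1 - 1 - k = s - k := by omega
      have e2 : s - (s - k) = k := by omega
      rw [e1, e2]
    rw [refl]
    refine Finset.sum_congr rfl fun k hk => ?_
    rw [Matrix.mul_apply, Matrix.mul_apply, Finset.mul_sum]
    refine Finset.sum_congr rfl fun l _ => ?_
    rw [ih]
    simp only [lamTilde]
    have h1 : π l ≠ 0 := hπ l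
    have h2 : π i ≠ 0 := hπ i
    field_simp

-- ENNReal framework
open Classical in
def eW {N : ℕ} (M : ℕ → Matrix (Fin N) (Fin N) ℝ) (μ : Fin N → ℝ) (n : ℕ)
    (J : Fin (n + 1) → Fin N) (C : Fin n → ℕ) : ℝ≥0∞ :=
  ENNReal.ofReal (μ (J 0)) * ∏ k : Fin n, ENNReal.ofReal (M (C k) (J k.castSucc) (J k.succ))

open Classical in
def eprob {N : ℕ} (M : ℕ → Matrix (Fin N) (Fin N) ℝ) (μ : Fin N → ℝ) (n : ℕ)
    (A : (Fin (n + 1) → Fin N) → (Fin n → ℕ) → Prop) : ℝ≥0∞ :=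
  ∑' p : (Fin (n + 1) → Fin N) × (Fin n → ℕ),
    if A p.1 p.2 then eW M μ n p.1 p.2 else 0

variable {N : ℕ} {M : ℕ → Matrix (Fin N) (Fin N) ℝ} {μ : Fin N → ℝ}

lemma eW_ne_top {n : ℕ} {J : Fin (n+1) → Fin N} {C : Fin n → ℕ} : eW M μ n J C ≠ ⊤ := by
  refine ENNReal.mul_ne_top ENNReal.ofReal_ne_top ?_
  exact (ENNReal.prod_lt_top fun k _ => ENNReal.ofReal_lt_top).ne

lemma prob_eq_toReal (hM : ∀ m i j, 0 ≤ M m i j) (hμ : ∀ i, 0 ≤ μ i) (n : ℕ)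
    (A : (Fin (n + 1) → Fin N) → (Fin n → ℕ) → Prop) :
    prob M μ n A = (eprob M μ n A).toReal := by
  classical
  have hpw : ∀ (J : Fin (n+1) → Fin N) (C : Fin n → ℕ),
      pathWeight M μ n J C = (eW M μ n J C).toReal := by
    intro J C
    rw [pathWeight, eW, ENNReal.toReal_mul, ENNReal.toReal_ofReal (hμ _), ENNReal.toReal_prod]
    congr 1
    exact Finset.prod_congr rfl fun k _ => (ENNReal.toReal_ofReal (hM _ _ _)).symm
  rw [prob, eprob]
  calc (∑' p : { p : (Fin (n + 1) → Fin N) × (Fin n → ℕ) // A p.1 p.2 },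
          pathWeight M μ n p.1.1 p.1.2)
      = ∑' p : { p : (Fin (n + 1) → Fin N) × (Fin n → ℕ) // A p.1 p.2 },
          (eW M μ n p.1.1 p.1.2).toReal := tsum_congr fun p => hpw _ _
    _ = (∑' p : { p : (Fin (n + 1) → Fin N) × (Fin n → ℕ) // A p.1 p.2 },
          eW M μ n p.1.1 p.1.2).toReal := (ENNReal.tsum_toReal_eq fun p => eW_ne_top).symm
    _ = (∑' p : (Fin (n + 1) → Fin N) × (Fin n → ℕ),
          if A p.1 p.2 then eW M μ n p.1 p.2 else 0).toReal := by
        congr 1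
        have hs := tsum_subtype {p : (Fin (n + 1) → Fin N) × (Fin n → ℕ) | A p.1 p.2}
          (fun p => eW M μ n p.1 p.2)
        refine hs.trans ?_
        refine tsum_congr fun p => ?_
        by_cases h : A p.1 p.2 <;> simp [Set.indicator_apply, h]

lemma eprob_congr {n : ℕ} {A B : (Fin (n + 1) → Fin N) → (Fin n → ℕ) → Prop}
    (h : ∀ J C, A J C ↔ B J C) : eprob M μ n A = eprob M μ n B := by
  refine tsum_congr fun p => ?_
  by_cases hh : A p.1 p.2
  · rw [if_pos hh, if_pos ((h _ _).mp hh)]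
  · rw [if_neg hh, if_neg (fun hb => hh ((h _ _).mpr hb))]

lemma tsum_unique {α : Type*} [Unique α] (f : α → ℝ≥0∞) : ∑' a, f a = f default :=
  tsum_eq_single default fun b hb => absurd (Unique.eq_default b) hb

lemma tsum_pi_prod (n : ℕ) (g : ℕ → ℝ≥0∞) :
    ∑' C : Fin n → ℕ, ∏ k : Fin n, g (C k) = (∑' c : ℕ, g c) ^ n := by
  induction n with
  | zero => rw [tsum_unique]; simp
  | succ n ih =>
    rw [← (Fin.consEquiv (fun _ : Fin (n+1) => ℕ)).tsum_eq
      (fun C : Fin (n+1) → ℕ => ∏ k : Fin (n+1), g (C k))]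
    have key : ∀ c : ℕ × (Fin n → ℕ),
        (∏ k : Fin (n+1), g (((Fin.consEquiv (fun _ : Fin (n+1) => ℕ)) c) k))
          = g c.1 * ∏ k : Fin n, g (c.2 k) := by
      intro c
      simp only [Fin.consEquiv_apply]
      rw [Fin.prod_univ_succ]
      simp
    calc ∑' (c : ℕ × (Fin n → ℕ)),
          (∏ k : Fin (n+1), g (((Fin.consEquiv (fun _ : Fin (n+1) => ℕ)) c) k))
        = ∑' (c : ℕ × (Fin n → ℕ)), g c.1 * ∏ k : Fin n, g (c.2 k) :=
          tsum_congr fun c => key c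
      _ = ∑' (a : ℕ) (b : Fin n → ℕ), g a * ∏ k : Fin n, g (b k) :=
          ENNReal.tsum_prod (f := fun (a : ℕ) (b : Fin n → ℕ) => g a * ∏ k : Fin n, g (b k))
      _ = ∑' (a : ℕ), g a * ((∑' c : ℕ, g c) ^ n) := by
          refine tsum_congr fun a => ?_
          rw [ENNReal.tsum_mul_left, ih]
      _ = (∑' c : ℕ, g c) ^ (n+1) := by
          rw [ENNReal.tsum_mul_right]; ring

lemma eprob_ne_top (hM : ∀ m i j, 0 ≤ M m i j) (hMs : ∀ i j, Summable fun m => M m i j)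
    {n : ℕ} {A : (Fin (n + 1) → Fin N) → (Fin n → ℕ) → Prop} :
    eprob M μ n A ≠ ⊤ := by
  classical
  set G : ℕ → ℝ≥0∞ := fun c => ∑ i, ∑ j, ENNReal.ofReal (M c i j) with hG
  have hGne : ∑' c, G c ≠ ⊤ := by
    rw [hG]
    rw [Summable.tsum_finsetSum (fun i _ => ENNReal.summable)]
    refine (ENNReal.sum_lt_top.mpr fun i _ => ?_).ne
    rw [Summable.tsum_finsetSum (fun j _ => ENNReal.summable)]
    refine ENNReal.sum_lt_top.mpr fun j _ => ?_
    rw [← ENNReal.ofReal_tsum_of_nonneg (fun m => hM m i j) (hMs i j)]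
    exact ENNReal.ofReal_lt_top
  have key : eprob M μ n A ≤ ∑' p : (Fin (n + 1) → Fin N) × (Fin n → ℕ),
      (∑ i, ENNReal.ofReal (μ i)) * ∏ k : Fin n, G (p.2 k) := by
    refine ENNReal.tsum_le_tsum fun p => ?_
    have h1 : (if A p.1 p.2 then eW M μ n p.1 p.2 else 0) ≤ eW M μ n p.1 p.2 := by
      split_ifs
      · exact le_rfl
      · exact zero_le
    refine le_trans h1 ?_
    rw [eW]
    refine mul_le_mul' ?_ ?_
    · exact Finset.single_le_sum (f := fun i => ENNReal.ofReal (μ i))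
        (fun i _ => zero_le) (Finset.mem_univ _)
    · refine Finset.prod_le_prod' fun k _ => ?_
      calc ENNReal.ofReal (M (p.2 k) (p.1 k.castSucc) (p.1 k.succ))
          ≤ ∑ j, ENNReal.ofReal (M (p.2 k) (p.1 k.castSucc) j) :=
            Finset.single_le_sum (f := fun j => ENNReal.ofReal (M (p.2 k) (p.1 k.castSucc) j))
              (fun j _ => zero_le) (Finset.mem_univ _)
        _ ≤ G (p.2 k) :=
            Finset.single_le_sum (f := fun i => ∑ j, ENNReal.ofReal (M (p.2 k) i j))
              (fun i _ => zero_le) (Finset.mem_univ _)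
  refine ne_top_of_le_ne_top ?_ key
  calc ∑' (p : (Fin (n + 1) → Fin N) × (Fin n → ℕ)),
        (∑ i, ENNReal.ofReal (μ i)) * ∏ k : Fin n, G (p.2 k)
      = ∑' (J : Fin (n+1) → Fin N) (C : Fin n → ℕ),
        (∑ i, ENNReal.ofReal (μ i)) * ∏ k : Fin n, G (C k) :=
          ENNReal.tsum_prod (f := fun (_ : Fin (n+1) → Fin N) (C : Fin n → ℕ) =>
            (∑ i, ENNReal.ofReal (μ i)) * ∏ k : Fin n, G (C k))
    _ = ∑' (J : Fin (n+1) → Fin N), (∑ i, ENNReal.ofReal (μ i)) * (∑' c, G c) ^ n := by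
        refine tsum_congr fun J => ?_
        rw [ENNReal.tsum_mul_left, tsum_pi_prod]
    _ = (Fintype.card (Fin (n+1) → Fin N) : ℝ≥0∞) *
        ((∑ i, ENNReal.ofReal (μ i)) * (∑' c, G c) ^ n) := by
        rw [tsum_fintype]
        simp [Finset.sum_const, nsmul_eq_mul]
    _ ≠ ⊤ := by
        refine ENNReal.mul_ne_top (ENNReal.natCast_ne_top _) ?_
        refine ENNReal.mul_ne_top ?_ (ENNReal.pow_ne_top hGne)
        exact (ENNReal.sum_lt_top.mpr fun i _ => ENNReal.ofReal_lt_top).ne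

lemma eprob_linear (hμ : ∀ i, 0 ≤ μ i) {n : ℕ}
    (A : (Fin (n + 1) → Fin N) → (Fin n → ℕ) → Prop) :
    eprob M μ n A = ∑ i, ENNReal.ofReal (μ i) * eprob M (delta i) n A := by
  classical
  have hrw : ∀ i, ENNReal.ofReal (μ i) * eprob M (delta i) n A
      = ∑' p : (Fin (n + 1) → Fin N) × (Fin n → ℕ),
          (if A p.1 p.2 then ENNReal.ofReal (μ i) * eW M (delta i) n p.1 p.2 else 0) := by
    intro i
    rw [eprob, ← ENNReal.tsum_mul_left]
    refine tsum_congr fun p => ?_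
    split_ifs <;> simp
  rw [Finset.sum_congr rfl (fun i _ => hrw i), ← Summable.tsum_finsetSum (fun i _ => ENNReal.summable)]
  refine tsum_congr fun p => ?_
  by_cases h : A p.1 p.2
  · simp only [h, if_true]
    have hterm : ∀ i, ENNReal.ofReal (μ i) * eW M (delta i) n p.1 p.2
        = (if p.1 0 = i then ENNReal.ofReal (μ i) else 0) *
            ∏ k : Fin n, ENNReal.ofReal (M (p.2 k) (p.1 k.castSucc) (p.1 k.succ)) := by
      intro i
      rw [eW, delta]
      by_cases hi : p.1 0 = i
      · simp only [hi, if_pos rfl, if_pos]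
        rw [ENNReal.ofReal_one, one_mul]
      · rw [if_neg hi, if_neg hi, ENNReal.ofReal_zero]
        simp
    rw [Finset.sum_congr rfl (fun i _ => hterm i), ← Finset.sum_mul,
      Finset.sum_ite_eq Finset.univ (p.1 0) (fun i => ENNReal.ofReal (μ i))]
    simp [eW]
  · simp [h]

-- ### Path splitting
def preJ {N : ℕ} (k r : ℕ) (J : Fin (k+r+1) → Fin N) : Fin (k+1) → Fin N :=
  fun t => J ⟨(t : ℕ), by omega⟩

def sufJ {N : ℕ} (k r : ℕ) (J : Fin (k+r+1) → Fin N) : Fin (r+1) → Fin N :=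
  fun t => J ⟨k + (t : ℕ), by omega⟩

def preC (k r : ℕ) (C : Fin (k+r) → ℕ) : Fin k → ℕ :=
  fun t => C ⟨(t : ℕ), by omega⟩

def sufC (k r : ℕ) (C : Fin (k+r) → ℕ) : Fin r → ℕ :=
  fun t => C ⟨k + (t : ℕ), by omega⟩

def chain {N r : ℕ} (j : Fin N) (Jt : Fin r → Fin N) : Fin (r+1) → Fin N := Fin.cons j Jt

lemma chain_zero {r : ℕ} (j : Fin N) (Jt : Fin r → Fin N) : chain j Jt 0 = j :=
  Fin.cons_zero _ _

lemma chain_succ {r : ℕ} (j : Fin N) (Jt : Fin r → Fin N) (s : Fin r) :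
    chain j Jt s.succ = Jt s := Fin.cons_succ _ _ _

def splitJ (N k r : ℕ) : (Fin (k+r+1) → Fin N) ≃ (Fin (k+1) → Fin N) × (Fin r → Fin N) where
  toFun J := (preJ k r J, fun t => J ⟨k + 1 + (t : ℕ), by omega⟩)
  invFun p := fun t =>
    if h : (t : ℕ) < k + 1 then p.1 ⟨(t : ℕ), h⟩ else p.2 ⟨(t : ℕ) - (k+1), by omega⟩
  left_inv J := by
    funext t
    dsimp only [preJ]
    by_cases h : (t : ℕ) < k + 1
    · rw [dif_pos h]
    · rw [dif_neg h]
      congr 1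
      refine Fin.ext ?_
      show k + 1 + ((t : ℕ) - (k+1)) = (t : ℕ)
      omega
  right_inv p := by
    refine Prod.ext ?_ ?_ <;> funext t <;> dsimp only [preJ]
    · rw [dif_pos (show (t : ℕ) < k + 1 from t.isLt)]
    · rw [dif_neg (show ¬ (k + 1 + (t : ℕ) < k + 1) by omega)]
      exact congrArg p.2 (Fin.ext (show k + 1 + (t : ℕ) - (k+1) = (t : ℕ) by omega))

def splitC (k r : ℕ) : (Fin (k+r) → ℕ) ≃ (Fin k → ℕ) × (Fin r → ℕ) where
  toFun C := (preC k r C, sufC k r C)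
  invFun p := fun t =>
    if h : (t : ℕ) < k then p.1 ⟨(t : ℕ), h⟩ else p.2 ⟨(t : ℕ) - k, by omega⟩
  left_inv C := by
    funext t
    dsimp only [preC, sufC]
    by_cases h : (t : ℕ) < k
    · rw [dif_pos h]
    · rw [dif_neg h]
      congr 1
      refine Fin.ext ?_
      show k + ((t : ℕ) - k) = (t : ℕ)
      omega
  right_inv p := by
    refine Prod.ext ?_ ?_ <;> funext t <;> dsimp only [preC, sufC]
    · rw [dif_pos (show (t : ℕ) < k from t.isLt)]
    · rw [dif_neg (show ¬ (k + (t : ℕ) < k) by omega)]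
      exact congrArg p.2 (Fin.ext (show k + (t : ℕ) - k = (t : ℕ) by omega))

lemma splitJ_symm_lt {k r : ℕ} (p : (Fin (k+1) → Fin N) × (Fin r → Fin N))
    {t : Fin (k+r+1)} (h : (t : ℕ) < k + 1) :
    (splitJ N k r).symm p t = p.1 ⟨(t : ℕ), h⟩ := dif_pos h

lemma splitJ_symm_ge {k r : ℕ} (p : (Fin (k+1) → Fin N) × (Fin r → Fin N))
    {t : Fin (k+r+1)} (h : ¬ (t : ℕ) < k + 1) :
    (splitJ N k r).symm p t = p.2 ⟨(t : ℕ) - (k+1), by omega⟩ := dif_neg h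

lemma splitC_symm_lt {k r : ℕ} (p : (Fin k → ℕ) × (Fin r → ℕ))
    {t : Fin (k+r)} (h : (t : ℕ) < k) :
    (splitC k r).symm p t = p.1 ⟨(t : ℕ), h⟩ := dif_pos h

lemma splitC_symm_ge {k r : ℕ} (p : (Fin k → ℕ) × (Fin r → ℕ))
    {t : Fin (k+r)} (h : ¬ (t : ℕ) < k) :
    (splitC k r).symm p t = p.2 ⟨(t : ℕ) - k, by omega⟩ := dif_neg h

lemma sufJ_splitJ_symm {k r : ℕ} (Jp : Fin (k+1) → Fin N) (Jt : Fin r → Fin N) :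
    sufJ k r ((splitJ N k r).symm (Jp, Jt)) = chain (Jp (Fin.last k)) Jt := by
  funext t
  induction t using Fin.cases with
  | zero =>
    rw [chain_zero]
    show (splitJ N k r).symm (Jp, Jt) ⟨k + ((0 : Fin (r+1)) : ℕ), _⟩ = Jp (Fin.last k)
    rw [splitJ_symm_lt (p := (Jp, Jt)) (by show k + ((0 : Fin (r+1)) : ℕ) < k + 1; simp)]
    exact congrArg Jp (Fin.ext (by simp))
  | succ s =>
    rw [chain_succ]
    show (splitJ N k r).symm (Jp, Jt) ⟨k + (s.succ : ℕ), _⟩ = Jt s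
    rw [splitJ_symm_ge (p := (Jp, Jt))
      (by show ¬ (k + (s.succ : ℕ) < k + 1); simp only [Fin.val_succ]; omega)]
    exact congrArg Jt (Fin.ext (show k + ((s : ℕ) + 1) - (k + 1) = (s : ℕ) by omega))

lemma preJ_splitJ_symm {k r : ℕ} (Jp : Fin (k+1) → Fin N) (Jt : Fin r → Fin N) :
    preJ k r ((splitJ N k r).symm (Jp, Jt)) = Jp :=
  congrArg Prod.fst ((splitJ N k r).apply_symm_apply (Jp, Jt))

lemma preC_splitC_symm {k r : ℕ} (Cp : Fin k → ℕ) (Ct : Fin r → ℕ) :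
    preC k r ((splitC k r).symm (Cp, Ct)) = Cp :=
  congrArg Prod.fst ((splitC k r).apply_symm_apply (Cp, Ct))

lemma sufC_splitC_symm {k r : ℕ} (Cp : Fin k → ℕ) (Ct : Fin r → ℕ) :
    sufC k r ((splitC k r).symm (Cp, Ct)) = Ct :=
  congrArg Prod.snd ((splitC k r).apply_symm_apply (Cp, Ct))

lemma eW_split {k r : ℕ} (Jp : Fin (k+1) → Fin N) (Jt : Fin r → Fin N)
    (Cp : Fin k → ℕ) (Ct : Fin r → ℕ) :
    eW M μ (k + r) ((splitJ N k r).symm (Jp, Jt)) ((splitC k r).symm (Cp, Ct))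
      = eW M μ k Jp Cp * ∏ t : Fin r, ENNReal.ofReal
          (M (Ct t) (chain (Jp (Fin.last k)) Jt t.castSucc)
            (chain (Jp (Fin.last k)) Jt t.succ)) := by
  set JJ := (splitJ N k r).symm (Jp, Jt) with hJJ
  set CC := (splitC k r).symm (Cp, Ct) with hCC
  rw [eW, eW]
  have h0 : JJ 0 = Jp 0 := by
    rw [hJJ, splitJ_symm_lt (p := (Jp, Jt)) (by simp)]
    congr 1
  have hprod : (∏ t : Fin (k+r), ENNReal.ofReal (M (CC t) (JJ t.castSucc) (JJ t.succ)))
      = (∏ t : Fin k, ENNReal.ofReal (M (Cp t) (Jp t.castSucc) (Jp t.succ)))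
        * ∏ t : Fin r, ENNReal.ofReal
            (M (Ct t) (chain (Jp (Fin.last k)) Jt t.castSucc)
              (chain (Jp (Fin.last k)) Jt t.succ)) := by
    rw [Fin.prod_univ_add (f := fun t : Fin (k+r) =>
      ENNReal.ofReal (M (CC t) (JJ t.castSucc) (JJ t.succ)))]
    congr 1
    · refine Finset.prod_congr rfl fun t _ => ?_
      have hc : CC (Fin.castAdd r t) = Cp t := by
        rw [hCC, splitC_symm_lt (p := (Cp, Ct))
          (show ((Fin.castAdd r t : Fin (k+r)) : ℕ) < k by
            simp only [Fin.coe_castAdd]; exact t.isLt)]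
        exact congrArg Cp (Fin.ext (by simp))
      have hj1 : JJ (Fin.castSucc (Fin.castAdd r t)) = Jp (Fin.castSucc t) := by
        rw [hJJ, splitJ_symm_lt (p := (Jp, Jt))
          (show ((Fin.castSucc (Fin.castAdd r t) : Fin (k+r+1)) : ℕ) < k + 1 by
            simp only [Fin.coe_castSucc, Fin.coe_castAdd]; omega)]
        exact congrArg Jp (Fin.ext (by simp))
      have hj2 : JJ (Fin.succ (Fin.castAdd r t)) = Jp (Fin.succ t) := by
        rw [hJJ, splitJ_symm_lt (p := (Jp, Jt))
          (show ((Fin.succ (Fin.castAdd r t) : Fin (k+r+1)) : ℕ) < k + 1 by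
            simp only [Fin.val_succ, Fin.coe_castAdd]; omega)]
        exact congrArg Jp (Fin.ext (by simp))
      rw [hc, hj1, hj2]
    · refine Finset.prod_congr rfl fun t _ => ?_
      have hc : CC (Fin.natAdd k t) = Ct t := by
        rw [hCC, splitC_symm_ge (p := (Cp, Ct))
          (show ¬ ((Fin.natAdd k t : Fin (k+r)) : ℕ) < k by
            simp only [Fin.coe_natAdd]; omega)]
        exact congrArg Ct (Fin.ext (show k + (t : ℕ) - k = (t : ℕ) by omega))
      have hj1 : JJ (Fin.castSucc (Fin.natAdd k t)) = sufJ k r JJ (Fin.castSucc t) := by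
        dsimp only [sufJ]
        exact congrArg JJ (Fin.ext (by simp))
      have hj2 : JJ (Fin.succ (Fin.natAdd k t)) = sufJ k r JJ (Fin.succ t) := by
        dsimp only [sufJ]
        exact congrArg JJ (Fin.ext (by simp; omega))
      rw [hc, hj1, hj2, hJJ, sufJ_splitJ_symm]
  rw [h0, hprod, mul_assoc]

lemma tsum_quad {α β γ δ : Type*} (f : (α × β) × (γ × δ) → ℝ≥0∞) :
    ∑' q, f q = ∑' (a : α) (b : β) (c : γ) (d : δ), f ((a, b), (c, d)) :=
  calc ∑' q : (α × β) × (γ × δ), f q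
      = ∑' (u : α × β) (v : γ × δ), f (u, v) :=
        ENNReal.tsum_prod (f := fun u v => f (u, v))
    _ = ∑' (a : α) (b : β), ∑' (v : γ × δ), f ((a, b), v) :=
        ENNReal.tsum_prod (f := fun a b => ∑' v : γ × δ, f ((a, b), v))
    _ = ∑' (a : α) (b : β) (c : γ) (d : δ), f ((a, b), (c, d)) :=
        tsum_congr fun a => tsum_congr fun b =>
          ENNReal.tsum_prod (f := fun c d => f ((a, b), (c, d)))

open Classical in
lemma eprob_split (M : ℕ → Matrix (Fin N) (Fin N) ℝ) (μ : Fin N → ℝ) (k r : ℕ)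
    (B : (Fin (k+1) → Fin N) → (Fin k → ℕ) → Prop)
    (D : (Fin (r+1) → Fin N) → (Fin r → ℕ) → Prop) :
    eprob M μ (k + r) (fun J C => B (preJ k r J) (preC k r C) ∧ D (sufJ k r J) (sufC k r C))
      = ∑ j, eprob M μ k (fun J C => B J C ∧ J (Fin.last k) = j) *
          eprob M (delta j) r D := by
  set g : Fin N → ℝ≥0∞ := fun j =>
    ∑' (Jt : Fin r → Fin N) (Ct : Fin r → ℕ),
      if D (chain j Jt) Ct then
        ∏ t : Fin r, ENNReal.ofReal
          (M (Ct t) (chain j Jt t.castSucc) (chain j Jt t.succ))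
      else 0 with hg
  have hgj : ∀ j, eprob M (delta j) r D = g j := by
    intro j
    rw [eprob]
    rw [ENNReal.tsum_prod (f := fun (J : Fin (r+1) → Fin N) (C : Fin r → ℕ) =>
      if D J C then eW M (delta j) r J C else 0)]
    rw [← (Fin.consEquiv (fun _ : Fin (r+1) => Fin N)).tsum_eq
      (fun J : Fin (r+1) → Fin N => ∑' C : Fin r → ℕ, if D J C then eW M (delta j) r J C else 0)]
    rw [ENNReal.tsum_prod (f := fun (a : Fin N) (Jt : Fin r → Fin N) =>
      ∑' C : Fin r → ℕ, if D ((Fin.consEquiv (fun _ : Fin (r+1) => Fin N)) (a, Jt)) C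
        then eW M (delta j) r ((Fin.consEquiv (fun _ : Fin (r+1) => Fin N)) (a, Jt)) C else 0)]
    rw [tsum_fintype]
    have hcons : ∀ (a : Fin N) (Jt : Fin r → Fin N),
        ((Fin.consEquiv (fun _ : Fin (r+1) => Fin N)) (a, Jt)) = chain a Jt := by
      intro a Jt; funext t; rw [Fin.consEquiv_apply]; rfl
    have heW : ∀ (a : Fin N) (Jt : Fin r → Fin N) (C : Fin r → ℕ),
        eW M (delta j) r (chain a Jt) C
          = ENNReal.ofReal (delta j a) * ∏ t : Fin r, ENNReal.ofReal
              (M (C t) (chain a Jt t.castSucc) (chain a Jt t.succ)) := by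
      intro a Jt C
      rw [eW, chain_zero]
    have keya : ∀ a : Fin N,
        (∑' (Jt : Fin r → Fin N) (C : Fin r → ℕ),
          if D ((Fin.consEquiv (fun _ : Fin (r+1) => Fin N)) (a, Jt)) C
            then eW M (delta j) r ((Fin.consEquiv (fun _ : Fin (r+1) => Fin N)) (a, Jt)) C else 0)
        = if a = j then g a else 0 := by
      intro a
      by_cases ha : a = j
      · subst ha
        rw [if_pos rfl, hg]
        refine tsum_congr fun Jt => tsum_congr fun C => ?_
        rw [hcons]
        by_cases hD : D (chain a Jt) C
        · rw [if_pos hD, if_pos hD, heW, delta, if_pos rfl, ENNReal.ofReal_one, one_mul]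
        · rw [if_neg hD, if_neg hD]
      · rw [if_neg ha]
        have hz : ∀ (Jt : Fin r → Fin N) (C : Fin r → ℕ),
            (if D ((Fin.consEquiv (fun _ : Fin (r+1) => Fin N)) (a, Jt)) C
              then eW M (delta j) r ((Fin.consEquiv (fun _ : Fin (r+1) => Fin N)) (a, Jt)) C
              else 0) = 0 := by
          intro Jt C
          rw [hcons]
          by_cases hD : D (chain a Jt) C
          · rw [if_pos hD, heW, delta, if_neg ha, ENNReal.ofReal_zero, zero_mul]
          · rw [if_neg hD]
        simp only [hz, tsum_zero]
    rw [Finset.sum_congr rfl fun a _ => keya a, Finset.sum_ite_eq' Finset.univ j g]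
    simp
  -- main computation
  rw [eprob]
  rw [← ((splitJ N k r).prodCongr (splitC k r)).symm.tsum_eq]
  have hpt : ∀ q : ((Fin (k+1) → Fin N) × (Fin r → Fin N)) × ((Fin k → ℕ) × (Fin r → ℕ)),
      (@ite _ (B (preJ k r ((((splitJ N k r).prodCongr (splitC k r)).symm q).1))
              (preC k r ((((splitJ N k r).prodCongr (splitC k r)).symm q).2))
            ∧ D (sufJ k r ((((splitJ N k r).prodCongr (splitC k r)).symm q).1))
              (sufC k r ((((splitJ N k r).prodCongr (splitC k r)).symm q).2)))
        (Classical.propDecidable _)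
        (eW M μ (k+r) ((((splitJ N k r).prodCongr (splitC k r)).symm q).1)
            ((((splitJ N k r).prodCongr (splitC k r)).symm q).2))
        0)
      = (if B q.1.1 q.2.1 then eW M μ k q.1.1 q.2.1 else 0) *
          (if D (chain (q.1.1 (Fin.last k)) q.1.2) q.2.2 then
            ∏ t : Fin r, ENNReal.ofReal
              (M (q.2.2 t) (chain (q.1.1 (Fin.last k)) q.1.2 t.castSucc)
                (chain (q.1.1 (Fin.last k)) q.1.2 t.succ)) else 0) := by
    intro q
    obtain ⟨⟨Jp, Jt⟩, Cp, Ct⟩ := q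
    have hq : (((splitJ N k r).prodCongr (splitC k r)).symm ((Jp, Jt), (Cp, Ct)))
        = ((splitJ N k r).symm (Jp, Jt), (splitC k r).symm (Cp, Ct)) := by
      rw [Equiv.prodCongr_symm, Equiv.prodCongr_apply]
      rfl
    rw [hq]
    simp only
    rw [preJ_splitJ_symm, preC_splitC_symm, sufJ_splitJ_symm, sufC_splitC_symm, eW_split]
    by_cases h1 : B Jp Cp <;>
      by_cases h2 : D (chain (Jp (Fin.last k)) Jt) Ct <;>
      simp [h1, h2]
  refine Eq.trans (tsum_congr hpt) (Eq.trans (tsum_quad _) ?_)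
  have hswap : ∀ Jp : Fin (k+1) → Fin N,
      (∑' (Jt : Fin r → Fin N) (Cp : Fin k → ℕ) (Ct : Fin r → ℕ),
        (if B Jp Cp then eW M μ k Jp Cp else 0) *
          (if D (chain (Jp (Fin.last k)) Jt) Ct then
            ∏ t : Fin r, ENNReal.ofReal
              (M (Ct t) (chain (Jp (Fin.last k)) Jt t.castSucc)
                (chain (Jp (Fin.last k)) Jt t.succ)) else 0))
      = ∑' (Cp : Fin k → ℕ),
          (if B Jp Cp then eW M μ k Jp Cp else 0) * g (Jp (Fin.last k)) := by
    intro Jp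
    rw [ENNReal.tsum_comm]
    refine tsum_congr fun Cp => ?_
    calc ∑' (Jt : Fin r → Fin N) (Ct : Fin r → ℕ),
          (if B Jp Cp then eW M μ k Jp Cp else 0) *
            (if D (chain (Jp (Fin.last k)) Jt) Ct then
              ∏ t : Fin r, ENNReal.ofReal
                (M (Ct t) (chain (Jp (Fin.last k)) Jt t.castSucc)
                  (chain (Jp (Fin.last k)) Jt t.succ)) else 0)
        = ∑' (Jt : Fin r → Fin N),
            (if B Jp Cp then eW M μ k Jp Cp else 0) *
              ∑' (Ct : Fin r → ℕ),
                (if D (chain (Jp (Fin.last k)) Jt) Ct then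
                  ∏ t : Fin r, ENNReal.ofReal
                    (M (Ct t) (chain (Jp (Fin.last k)) Jt t.castSucc)
                      (chain (Jp (Fin.last k)) Jt t.succ)) else 0) :=
          tsum_congr fun Jt => ENNReal.tsum_mul_left
      _ = (if B Jp Cp then eW M μ k Jp Cp else 0) * g (Jp (Fin.last k)) := by
          rw [ENNReal.tsum_mul_left, hg]
  refine Eq.trans (tsum_congr fun Jp => hswap Jp) ?_
  have hins : ∀ (Jp : Fin (k+1) → Fin N) (Cp : Fin k → ℕ),
      (if B Jp Cp then eW M μ k Jp Cp else 0) * g (Jp (Fin.last k))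
        = ∑ j, (if Jp (Fin.last k) = j then
            (if B Jp Cp then eW M μ k Jp Cp else 0) * g j else 0) := by
    intro Jp Cp
    rw [Finset.sum_ite_eq Finset.univ (Jp (Fin.last k))
      (fun j => (if B Jp Cp then eW M μ k Jp Cp else 0) * g j)]
    simp
  calc ∑' (Jp : Fin (k+1) → Fin N) (Cp : Fin k → ℕ),
        (if B Jp Cp then eW M μ k Jp Cp else 0) * g (Jp (Fin.last k))
      = ∑' (Jp : Fin (k+1) → Fin N) (Cp : Fin k → ℕ),
          ∑ j, (if Jp (Fin.last k) = j then
            (if B Jp Cp then eW M μ k Jp Cp else 0) * g j else 0) :=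
        tsum_congr fun Jp => tsum_congr fun Cp => hins Jp Cp
    _ = ∑ j, ∑' (Jp : Fin (k+1) → Fin N) (Cp : Fin k → ℕ),
          (if Jp (Fin.last k) = j then
            (if B Jp Cp then eW M μ k Jp Cp else 0) * g j else 0) := by
        rw [tsum_congr (fun Jp : Fin (k+1) → Fin N =>
          Summable.tsum_finsetSum (f := fun j (Cp : Fin k → ℕ) =>
            if Jp (Fin.last k) = j then
              (if B Jp Cp then eW M μ k Jp Cp else 0) * g j else 0)
            (fun j _ => ENNReal.summable)),
          Summable.tsum_finsetSum (fun j _ => ENNReal.summable)]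
    _ = ∑ j, eprob M μ k (fun J C => B J C ∧ J (Fin.last k) = j) *
          eprob M (delta j) r D := by
        refine Finset.sum_congr rfl fun j _ => ?_
        rw [hgj j]
        have hpt2 : ∀ (Jp : Fin (k+1) → Fin N) (Cp : Fin k → ℕ),
            (if Jp (Fin.last k) = j then
              (if B Jp Cp then eW M μ k Jp Cp else 0) * g j else 0)
              = (@ite _ (B Jp Cp ∧ Jp (Fin.last k) = j) (Classical.propDecidable _)
                  (eW M μ k Jp Cp) 0) * g j := by
          intro Jp Cp
          by_cases h1 : B Jp Cp <;> by_cases h2 : Jp (Fin.last k) = j <;>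
            simp [h1, h2]
        rw [tsum_congr (fun Jp => tsum_congr fun Cp => hpt2 Jp Cp)]
        rw [tsum_congr (fun Jp : Fin (k+1) → Fin N => ENNReal.tsum_mul_right),
          ENNReal.tsum_mul_right]
        congr 1
        rw [eprob]
        exact (ENNReal.tsum_prod (f := fun (Jp : Fin (k+1) → Fin N) (Cp : Fin k → ℕ) =>
          @ite _ (B Jp Cp ∧ Jp (Fin.last k) = j) (Classical.propDecidable _)
            (eW M μ k Jp Cp) 0)).symm

lemma eprob_eq {n : ℕ} (A : (Fin (n + 1) → Fin N) → (Fin n → ℕ) → Prop)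
    [inst : ∀ J C, Decidable (A J C)] :
    eprob M μ n A = ∑' p : (Fin (n + 1) → Fin N) × (Fin n → ℕ),
      if A p.1 p.2 then eW M μ n p.1 p.2 else 0 :=
  tsum_congr fun p => by by_cases h : A p.1 p.2 <;> simp [h]

open Classical in
lemma eprob_one (M : ℕ → Matrix (Fin N) (Fin N) ℝ) (i j : Fin N) (c : ℕ) :
    eprob M (delta i) 1 (fun J C => C 0 = c ∧ J (Fin.last 1) = j)
      = ENNReal.ofReal (M c i j) := by
  rw [eprob_eq]
  refine Eq.trans (ENNReal.tsum_prod (f := fun (J : Fin 2 → Fin N) (C : Fin 1 → ℕ) =>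
    if C 0 = c ∧ J (Fin.last 1) = j then eW M (delta i) 1 J C else 0)) ?_
  rw [tsum_fintype]
  have hC : ∀ J : Fin 2 → Fin N,
      (∑' C : Fin 1 → ℕ, if C 0 = c ∧ J (Fin.last 1) = j then eW M (delta i) 1 J C else 0)
        = if J (Fin.last 1) = j then eW M (delta i) 1 J (fun _ => c) else 0 := by
    intro J
    refine Eq.trans ((Equiv.funUnique (Fin 1) ℕ).symm.tsum_eq (fun C : Fin 1 → ℕ =>
      if C 0 = c ∧ J (Fin.last 1) = j then eW M (delta i) 1 J C else 0)).symm ?_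
    rw [tsum_eq_single c ?_]
    · by_cases hj : J (Fin.last 1) = j
      · rw [if_pos ⟨rfl, hj⟩, if_pos hj]
        exact congrArg (eW M (delta i) 1 J) (funext fun x => rfl)
      · rw [if_neg (fun h => hj h.2), if_neg hj]
    · intro b hb
      rw [if_neg]
      intro h
      exact hb h.1
  rw [Finset.sum_congr rfl fun J _ => hC J]
  rw [← Equiv.sum_comp (finTwoArrowEquiv (Fin N)).symm
    (fun J : Fin 2 → Fin N => if J (Fin.last 1) = j then eW M (delta i) 1 J (fun _ => c) else 0)]
  rw [Fintype.sum_prod_type]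
  have hval : ∀ a b : Fin N,
      eW M (delta i) 1 ((finTwoArrowEquiv (Fin N)).symm (a, b)) (fun _ => c)
        = ENNReal.ofReal (delta i a) * ENNReal.ofReal (M c a b) := by
    intro a b
    rw [eW, Fin.prod_univ_one]
    have h1 : ((finTwoArrowEquiv (Fin N)).symm (a, b)) 0 = a := by
      simp [finTwoArrowEquiv]
    have h2 : ((finTwoArrowEquiv (Fin N)).symm (a, b)) ((0 : Fin 1).castSucc) = a := by
      simp [finTwoArrowEquiv]
    have h3 : ((finTwoArrowEquiv (Fin N)).symm (a, b)) ((0 : Fin 1).succ) = b := by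
      simp [finTwoArrowEquiv]
    rw [h1, h2, h3]
  have hlast : ∀ a b : Fin N,
      ((finTwoArrowEquiv (Fin N)).symm (a, b)) (Fin.last 1) = b := by
    intro a b
    simp [finTwoArrowEquiv, Fin.last]
  calc ∑ a, ∑ b, (if ((finTwoArrowEquiv (Fin N)).symm (a, b)) (Fin.last 1) = j
          then eW M (delta i) 1 ((finTwoArrowEquiv (Fin N)).symm (a, b)) (fun _ => c) else 0)
      = ∑ a, ∑ b, (if b = j then ENNReal.ofReal (delta i a) * ENNReal.ofReal (M c a b) else 0) := by
        refine Finset.sum_congr rfl fun a _ => Finset.sum_congr rfl fun b _ => ?_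
        rw [hlast, hval]
    _ = ∑ a, ENNReal.ofReal (delta i a) * ENNReal.ofReal (M c a j) := by
        refine Finset.sum_congr rfl fun a _ => ?_
        rw [Finset.sum_ite_eq' Finset.univ j
          (fun b => ENNReal.ofReal (delta i a) * ENNReal.ofReal (M c a b))]
        simp
    _ = ENNReal.ofReal (M c i j) := by
        have : ∀ a, ENNReal.ofReal (delta i a) * ENNReal.ofReal (M c a j)
            = if a = i then ENNReal.ofReal (M c a j) else 0 := by
          intro a
          rw [delta]
          by_cases ha : a = i
          · rw [if_pos ha, if_pos ha, ENNReal.ofReal_one, one_mul]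
          · rw [if_neg ha, if_neg ha, ENNReal.ofReal_zero, zero_mul]
        rw [Finset.sum_congr rfl fun a _ => this a,
          Finset.sum_ite_eq' Finset.univ i (fun a => ENNReal.ofReal (M c a j))]
        simp

open Classical in
lemma eprob_conv (M : ℕ → Matrix (Fin N) (Fin N) ℝ) (hM : ∀ m i j, 0 ≤ M m i j)
    (n : ℕ) (i : Fin N) : ∀ (s : ℕ) (j : Fin N),
    eprob M (delta i) n (fun J C => (∑ t, C t) = s ∧ J (Fin.last n) = j)
      = ENNReal.ofReal (conv M n s i j) := by
  induction n with
  | zero =>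
    intro s j
    rw [eprob_eq]
    refine Eq.trans (ENNReal.tsum_prod (f := fun (J : Fin 1 → Fin N) (C : Fin 0 → ℕ) =>
      if (∑ t, C t) = s ∧ J (Fin.last 0) = j then eW M (delta i) 0 J C else 0)) ?_
    rw [tsum_fintype]
    have hJ : ∀ J : Fin 1 → Fin N,
        (∑' C : Fin 0 → ℕ, if (∑ t : Fin 0, C t) = s ∧ J (Fin.last 0) = j
            then eW M (delta i) 0 J C else 0)
          = if 0 = s ∧ J (Fin.last 0) = j then ENNReal.ofReal (delta i (J 0)) else 0 := by
      intro J
      rw [tsum_unique]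
      have he : ∀ C : Fin 0 → ℕ, eW M (delta i) 0 J C = ENNReal.ofReal (delta i (J 0)) := by
        intro C
        rw [eW]
        simp
      exact if_congr (by simp) (he _) rfl
    rw [Finset.sum_congr rfl fun J _ => hJ J]
    rw [← Equiv.sum_comp (Equiv.funUnique (Fin 1) (Fin N)).symm
      (fun J : Fin 1 → Fin N => if 0 = s ∧ J (Fin.last 0) = j
        then ENNReal.ofReal (delta i (J 0)) else 0)]
    have happ : ∀ a : Fin N, ((Equiv.funUnique (Fin 1) (Fin N)).symm a) (Fin.last 0) = a := fun a => rfl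
    have happ0 : ∀ a : Fin N, ((Equiv.funUnique (Fin 1) (Fin N)).symm a) 0 = a := fun a => rfl
    by_cases hs : s = 0
    · subst hs
      calc ∑ a : Fin N, (if (0 : ℕ) = 0 ∧ ((Equiv.funUnique (Fin 1) (Fin N)).symm a) (Fin.last 0) = j
              then ENNReal.ofReal (delta i (((Equiv.funUnique (Fin 1) (Fin N)).symm a) 0)) else 0)
          = ∑ a : Fin N, (if a = j then ENNReal.ofReal (delta i a) else 0) := by
            refine Finset.sum_congr rfl fun a _ => ?_
            rw [happ0]
            by_cases ha : a = j
            · rw [if_pos ⟨rfl, by rw [happ]; exact ha⟩, if_pos ha]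
            · rw [if_neg (fun h => ha (by rw [happ] at h; exact h.2)), if_neg ha]
        _ = ENNReal.ofReal (delta i j) := by
            rw [Finset.sum_ite_eq' Finset.univ j (fun a => ENNReal.ofReal (delta i a))]
            simp
        _ = ENNReal.ofReal (conv M 0 0 i j) := by
            rw [conv, if_pos rfl, delta, Matrix.one_apply]
            by_cases hij : i = j
            · rw [if_pos hij, if_pos hij.symm]
            · rw [if_neg hij, if_neg (fun h => hij h.symm)]
    · have hz : ∀ a : Fin N, (if (0 : ℕ) = s ∧ ((Equiv.funUnique (Fin 1) (Fin N)).symm a) (Fin.last 0) = j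
          then ENNReal.ofReal (delta i (((Equiv.funUnique (Fin 1) (Fin N)).symm a) 0)) else 0) = 0 := by
        intro a
        rw [if_neg (fun h => hs h.1.symm)]
      rw [Finset.sum_congr rfl fun a _ => hz a]
      rw [conv, if_neg hs]
      simp
  | succ n ih =>
    intro s j
    have key : eprob M (delta i) (n+1) (fun J C => (∑ t, C t) = s ∧ J (Fin.last (n+1)) = j)
        = ∑ cc ∈ Finset.range (s+1), eprob M (delta i) (n + 1)
            (fun J C => ((∑ t, (preC n 1 C) t) = s - cc)
              ∧ ((sufC n 1 C) 0 = cc ∧ (sufJ n 1 J) (Fin.last 1) = j)) := by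
      rw [eprob_eq]
      have hrw : ∀ cc, eprob M (delta i) (n + 1)
          (fun J C => ((∑ t, (preC n 1 C) t) = s - cc)
            ∧ ((sufC n 1 C) 0 = cc ∧ (sufJ n 1 J) (Fin.last 1) = j))
          = ∑' p : (Fin (n + 1 + 1) → Fin N) × (Fin (n+1) → ℕ),
              if ((∑ t, (preC n 1 p.2) t) = s - cc)
                  ∧ ((sufC n 1 p.2) 0 = cc ∧ (sufJ n 1 p.1) (Fin.last 1) = j)
                then eW M (delta i) (n+1) p.1 p.2 else 0 := fun cc => eprob_eq _
      rw [Finset.sum_congr rfl fun cc _ => hrw cc, ← Summable.tsum_finsetSum (fun cc _ => ENNReal.summable)]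
      refine tsum_congr fun p => ?_
      obtain ⟨J, C⟩ := p
      dsimp only
      have hsum : (∑ t, C t) = (∑ t : Fin n, (preC n 1 C) t) + (sufC n 1 C) 0 := by
        have e2 : (sufC n 1 C) 0 = C (Fin.last n) := congrArg C (Fin.ext (by simp [sufC]))
        have e1 : ∀ t : Fin n, (preC n 1 C) t = C t.castSucc :=
          fun t => congrArg C (Fin.ext (by simp [preC]))
        rw [Fin.sum_univ_castSucc, e2, Finset.sum_congr rfl fun t _ => e1 t]
      have hlast : J (Fin.last (n+1)) = (sufJ n 1 J) (Fin.last 1) := by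
        exact congrArg J (Fin.ext (by simp [sufJ]))
      by_cases hev : (∑ t, C t) = s ∧ J (Fin.last (n+1)) = j
      · rw [if_pos hev]
        have h1 := hev.1
        rw [hsum] at h1
        have hd : (sufC n 1 C) 0 ∈ Finset.range (s+1) := by
          rw [Finset.mem_range]
          omega
        rw [Finset.sum_eq_single_of_mem ((sufC n 1 C) 0) hd ?_]
        · rw [if_pos ⟨by omega, rfl, by rw [← hlast]; exact hev.2⟩]
        · intro cc _ hcc
          rw [if_neg (fun h => hcc (h.2.1.symm))]
      · rw [if_neg hev]
        refine (Finset.sum_eq_zero fun cc hcc => ?_).symm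
        rw [Finset.mem_range] at hcc
        rw [if_neg]
        rintro ⟨h1, h2, h3⟩
        refine hev ⟨?_, by rw [hlast]; exact h3⟩
        rw [hsum, h2]
        omega
    rw [key]
    rw [Finset.sum_congr rfl (fun cc _ => eprob_split M (delta i) n 1
      (fun _ Cp => (∑ t, Cp t) = s - cc)
      (fun J' C' => C' 0 = cc ∧ J' (Fin.last 1) = j))]
    have hterm : ∀ cc ∈ Finset.range (s+1),
        (∑ j' : Fin N, eprob M (delta i) n (fun J C => (∑ t, C t) = s - cc ∧ J (Fin.last n) = j') *
          eprob M (delta j') 1 (fun J' C' => C' 0 = cc ∧ J' (Fin.last 1) = j))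
        = ENNReal.ofReal ((conv M n (s - cc) * M (s - (s - cc))) i j) := by
      intro cc hcc
      rw [Finset.mem_range] at hcc
      have hscc : s - (s - cc) = cc := by omega
      rw [hscc, Matrix.mul_apply]
      rw [ENNReal.ofReal_sum_of_nonneg
        (fun j' _ => mul_nonneg (conv_nonneg hM _ _ _ _) (hM _ _ _))]
      refine Finset.sum_congr rfl fun j' _ => ?_
      rw [ENNReal.ofReal_mul (conv_nonneg hM _ _ _ _), ih (s - cc) j', eprob_one]
    rw [Finset.sum_congr rfl hterm]
    have hrefl : ∑ cc ∈ Finset.range (s+1),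
        ENNReal.ofReal ((conv M n (s - cc) * M (s - (s - cc))) i j)
        = ∑ cc ∈ Finset.range (s+1), ENNReal.ofReal ((conv M n cc * M (s - cc)) i j) := by
      have h := Finset.sum_range_reflect
        (fun cc => ENNReal.ofReal ((conv M n cc * M (s - cc)) i j)) (s+1)
      rw [← h]
      refine Finset.sum_congr rfl fun cc hcc => ?_
      rw [Finset.mem_range] at hcc
      have e1 : s + 1 - 1 - cc = s - cc := by omega
      rw [e1]
    rw [hrefl, ← ENNReal.ofReal_sum_of_nonneg (fun cc _ => by
      rw [Matrix.mul_apply]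
      exact Finset.sum_nonneg fun l _ => mul_nonneg (conv_nonneg hM _ _ _ _) (hM _ _ _))]
    congr 1
    rw [conv, Matrix.sum_apply]

open Classical in
lemma eprob_def' {n : ℕ} (A : (Fin (n + 1) → Fin N) → (Fin n → ℕ) → Prop) :
    eprob M μ n A = ∑' p : (Fin (n + 1) → Fin N) × (Fin n → ℕ),
      @ite _ (A p.1 p.2) (Classical.propDecidable _) (eW M μ n p.1 p.2) 0 :=
  tsum_congr fun p => if_congr Iff.rfl rfl rfl

open Classical in
lemma eprob_fiber_last {n : ℕ} (E : (Fin n → ℕ) → Prop) :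
    eprob M μ n (fun _ C => E C)
      = ∑ j, eprob M μ n (fun J C => E C ∧ J (Fin.last n) = j) := by
  rw [eprob_def', Finset.sum_congr rfl (fun j _ => eprob_def' (M := M) (μ := μ)
    (fun J C => E C ∧ J (Fin.last n) = j)), ← Summable.tsum_finsetSum (fun _ _ => ENNReal.summable)]
  refine tsum_congr fun p => ?_
  by_cases hE : E p.2
  · rw [if_pos hE]
    have hj : ∀ j, (@ite _ (E p.2 ∧ p.1 (Fin.last n) = j) (Classical.propDecidable _)
          (eW M μ n p.1 p.2) 0)
        = (if p.1 (Fin.last n) = j then eW M μ n p.1 p.2 else 0) := by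
      intro j
      by_cases h : p.1 (Fin.last n) = j
      · rw [if_pos ⟨hE, h⟩, if_pos h]
      · rw [if_neg (fun hh => h hh.2), if_neg h]
    rw [Finset.sum_congr rfl fun j _ => hj j,
      Finset.sum_ite_eq Finset.univ (p.1 (Fin.last n)) (fun _ => eW M μ n p.1 p.2)]
    simp
  · rw [if_neg hE]
    exact (Finset.sum_eq_zero fun j _ => if_neg (fun h : E p.2 ∧ _ => hE h.1)).symm

open Classical in
lemma eprob_sum_conv (M : ℕ → Matrix (Fin N) (Fin N) ℝ) (hM : ∀ m i j, 0 ≤ M m i j)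
    (n s : ℕ) (i : Fin N) :
    eprob M (delta i) n (fun _ C => (∑ t, C t) = s)
      = ∑ j, ENNReal.ofReal (conv M n s i j) := by
  rw [eprob_fiber_last]
  exact Finset.sum_congr rfl fun j _ => eprob_conv M hM n i s j

open Classical in
lemma term_eval (M : ℕ → Matrix (Fin N) (Fin N) ℝ) (π : Fin N → ℝ)
    (m x k r : ℕ) (hm : 1 ≤ m) (hmk : m ≤ k) :
    eprob M π (k + r) (fun _J C => (∀ l, l < k → (l:ℤ) - S C l < (m:ℤ))
        ∧ ((m:ℤ) ≤ (k:ℤ) - S C k) ∧ S C (k+r) = (k+r) + x - m)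
      = ∑ j, eprob M π k (fun J C =>
          ((∀ l, l < k → (l:ℤ) - S C l < (m:ℤ)) ∧ (m:ℤ) ≤ (k:ℤ) - S C k)
            ∧ J (Fin.last k) = j)
        * eprob M (delta j) r (fun _ C => (∑ t, C t) = r + x) := by
  refine Eq.trans (eprob_congr ?_) (eprob_split M π k r
    (fun _Jp Cp => (∀ l, l < k → (l:ℤ) - S Cp l < (m:ℤ)) ∧ (m:ℤ) ≤ (k:ℤ) - S Cp k)
    (fun _J' C' => (∑ t, C' t) = r + x))
  intro J C
  have hSpre : ∀ l, l ≤ k → S (preC k r C) l = S C l := fun l hl => S_castAdd C hl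
  have hSfullpre : S (preC k r C) k = ∑ t : Fin k, preC k r C t := S_full _
  have htot : S C (k+r) = (∑ t : Fin k, preC k r C t) + ∑ t : Fin r, sufC k r C t := by
    rw [S_full, Fin.sum_univ_add (f := fun t : Fin (k+r) => C t)]
    rfl
  constructor
  · rintro ⟨h1, h2, h3⟩
    have hSk : S C k = k - m := by
      have ha := h1 (k-1) (by omega)
      have hb := S_mono C (show k-1 ≤ k by omega)
      omega
    refine ⟨⟨fun l hl => by rw [hSpre l (le_of_lt hl)]; exact h1 l hl,
      by rw [hSpre k le_rfl]; exact h2⟩, ?_⟩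
    have hpre : (∑ t : Fin k, preC k r C t) = k - m := by
      rw [← hSfullpre, hSpre k le_rfl, hSk]
    omega
  · rintro ⟨⟨h1, h2⟩, h3⟩
    have h1' : ∀ l, l < k → (l:ℤ) - S C l < (m:ℤ) := fun l hl => by
      rw [← hSpre l (le_of_lt hl)]; exact h1 l hl
    have h2' : (m:ℤ) ≤ (k:ℤ) - S C k := by rw [← hSpre k le_rfl]; exact h2
    have hSk : S C k = k - m := by
      have ha := h1' (k-1) (by omega)
      have hb := S_mono C (show k-1 ≤ k by omega)
      omega
    refine ⟨h1', h2', ?_⟩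
    have hpre : (∑ t : Fin k, preC k r C t) = k - m := by
      rw [← hSfullpre, hSpre k le_rfl, hSk]
    omega

/-- First-passage decomposition for the reversed process.  Assume the
environment chain stationary with distribution `π`.  For every `x`, `n ≥ 1` and
`1 ≤ m ≤ x + n`,
`P_π(τ̃_m^+ ≥ n, X̃_n = m − x) = π·Λ^{*n}(n+x−m)·e −
Σ_{k=m}^{n−1} π·Λ^{*(n−k)}(n+x−k)·V(k,m)·e`. -/
theorem reversed_first_passage_decomposition
    {N : ℕ} (hN : 1 ≤ N)
    (Λ : ℕ → Matrix (Fin N) (Fin N) ℝ) (P : Matrix (Fin N) (Fin N) ℝ)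
    (hΛ : ∀ m i j, 0 ≤ Λ m i j)
    (hP : ∀ i j, HasSum (fun m => Λ m i j) (P i j))
    (hPstoch : ∀ i, ∑ j, P i j = 1)
    (π : Fin N → ℝ) (hπpos : ∀ i, 0 < π i) (hπsum : ∑ i, π i = 1)
    (hπP : ∀ j, ∑ i, π i * P i j = π j)
    (x n m : ℕ) (hn : 1 ≤ n) (hm : 1 ≤ m) (hmx : m ≤ x + n) :
    prob (lamTilde Λ π) π n (fun _J C =>
        (∀ k, k < n → (k : ℤ) - S C k < (m : ℤ)) ∧ (n : ℤ) - S C n = (m : ℤ) - x) =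
      (∑ i, ∑ j, π i * conv Λ n (n + x - m) i j) -
        ∑ k ∈ Finset.Icc m (n - 1), ∑ i, ∑ j,
          π i * (conv Λ (n - k) (n + x - k) * Vmat Λ π k m) i j := by
  classical
  set M := lamTilde Λ π with hMdef
  have hπnn : ∀ i, 0 ≤ π i := fun i => (hπpos i).le
  have hπne : ∀ i, π i ≠ 0 := fun i => (hπpos i).ne'
  have hMnn : ∀ c i j, 0 ≤ M c i j := fun c i j =>
    mul_nonneg (div_nonneg (hπnn _) (hπnn _)) (hΛ _ _ _)
  have hMs : ∀ i j, Summable fun c => M c i j := fun i j =>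
    (hP j i).summable.mul_left _
  have hδnn : ∀ (i i' : Fin N), 0 ≤ delta i i' := by
    intro i i'
    rw [delta]
    split_ifs <;> norm_num
  rw [prob_eq_toReal hMnn hπnn]
  have hev : eprob M π n (fun _J C =>
        (∀ k, k < n → (k:ℤ) - S C k < (m:ℤ)) ∧ (n:ℤ) - S C n = (m:ℤ) - (x:ℤ))
      = eprob M π n (fun _J C =>
        (∀ k, k < n → (k:ℤ) - S C k < (m:ℤ)) ∧ S C n = n + x - m) :=
    eprob_congr fun J C => by
      constructor <;> rintro ⟨h1, h2⟩ <;> exact ⟨h1, by omega⟩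
  rw [hev]
  have hpart : eprob M π n (fun _J C => S C n = n + x - m)
      = eprob M π n (fun _J C =>
          (∀ k, k < n → (k:ℤ) - S C k < (m:ℤ)) ∧ S C n = n + x - m)
        + ∑ k ∈ Finset.Icc m (n-1), eprob M π n (fun _J C =>
            (∀ l, l < k → (l:ℤ) - S C l < (m:ℤ)) ∧ ((m:ℤ) ≤ (k:ℤ) - S C k)
              ∧ S C n = n + x - m) := by
    rw [eprob_def' (M := M) (μ := π) (fun _J C => S C n = n + x - m),
      eprob_def' (M := M) (μ := π) (fun _J C =>
        (∀ k, k < n → (k:ℤ) - S C k < (m:ℤ)) ∧ S C n = n + x - m),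
      Finset.sum_congr rfl (fun (k : ℕ) _ => eprob_def' (M := M) (μ := π) (fun _J C =>
        (∀ l : ℕ, l < k → (l:ℤ) - S C l < (m:ℤ)) ∧ ((m:ℤ) ≤ (k:ℤ) - S C k)
          ∧ S C n = n + x - m)),
      ← Summable.tsum_finsetSum (fun k _ => ENNReal.summable), ← ENNReal.tsum_add]
    refine tsum_congr fun p => ?_
    obtain ⟨J, C⟩ := p
    dsimp only
    by_cases hs : S C n = n + x - m
    · by_cases hall : ∀ k, k < n → (k:ℤ) - S C k < (m:ℤ)
      · have hzero : ∑ k ∈ Finset.Icc m (n-1),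
            @ite _ ((∀ l : ℕ, l < k → (l:ℤ) - S C l < (m:ℤ)) ∧ ((m:ℤ) ≤ (k:ℤ) - S C k)
              ∧ S C n = n + x - m) (Classical.propDecidable _) (eW M π n J C) 0 = 0 :=
          Finset.sum_eq_zero fun k hk => if_neg (fun hB => by
            rw [Finset.mem_Icc] at hk
            have h2 := hB.2.1
            have h3 := hall k (by omega)
            omega)
        rw [if_pos hs, if_pos ⟨hall, hs⟩, hzero, add_zero]
      · push_neg at hall
        have hex : ∃ k, k < n ∧ (m:ℤ) ≤ (k:ℤ) - S C k := hall
        obtain ⟨hk0n, hk0⟩ := Nat.find_spec hex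
        have hmin : ∀ l, l < Nat.find hex → ¬(l < n ∧ (m:ℤ) ≤ (l:ℤ) - S C l) :=
          fun l hl => Nat.find_min hex hl
        have hk0m : m ≤ Nat.find hex := by omega
        have hmem : Nat.find hex ∈ Finset.Icc m (n-1) := by
          rw [Finset.mem_Icc]
          omega
        have hsingle : ∑ k ∈ Finset.Icc m (n-1),
            @ite _ ((∀ l : ℕ, l < k → (l:ℤ) - S C l < (m:ℤ)) ∧ ((m:ℤ) ≤ (k:ℤ) - S C k)
              ∧ S C n = n + x - m) (Classical.propDecidable _) (eW M π n J C) 0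
            = eW M π n J C := by
          refine (Finset.sum_eq_single_of_mem (Nat.find hex) hmem
            (fun b hb hbne => if_neg (fun hB => ?_))).trans (if_pos ⟨fun l hl => ?_, hk0, hs⟩)
          · rw [Finset.mem_Icc] at hb
            rcases lt_or_gt_of_ne hbne with hlt | hgt
            · exact (not_and.mp (hmin b hlt) (by omega)) hB.2.1
            · have := hB.1 (Nat.find hex) hgt
              omega
          · have hln : l < n := by omega
            have := not_and.mp (hmin l hl) hln
            omega
        rw [if_pos hs, if_neg (fun hA :
            (∀ k, k < n → (k:ℤ) - S C k < (m:ℤ)) ∧ S C n = n + x - m => by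
          have := hA.1 (Nat.find hex) hk0n
          omega), zero_add, hsingle]
    · have hzero : ∑ k ∈ Finset.Icc m (n-1),
          @ite _ ((∀ l : ℕ, l < k → (l:ℤ) - S C l < (m:ℤ)) ∧ ((m:ℤ) ≤ (k:ℤ) - S C k)
            ∧ S C n = n + x - m) (Classical.propDecidable _) (eW M π n J C) 0 = 0 :=
        Finset.sum_eq_zero fun k _ => if_neg (fun hB => hs hB.2.2)
      rw [if_neg hs, if_neg (fun hA :
          (∀ k, k < n → (k:ℤ) - S C k < (m:ℤ)) ∧ S C n = n + x - m => hs hA.2),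
        hzero, add_zero]
  have hS : (eprob M π n (fun _J C => S C n = n + x - m)).toReal
      = ∑ i, ∑ j, π i * conv Λ n (n + x - m) i j := by
    have h1 : eprob M π n (fun _J C => S C n = n + x - m)
        = eprob M π n (fun _J C => (∑ t, C t) = n + x - m) :=
      eprob_congr fun J C => by rw [S_full C]
    rw [h1, eprob_linear hπnn,
      Finset.sum_congr rfl (fun i _ => by rw [eprob_sum_conv M hMnn n (n+x-m) i])]
    rw [ENNReal.toReal_sum (f := fun i => ENNReal.ofReal (π i) * ∑ j, ENNReal.ofReal (conv M n (n+x-m) i j)) (fun i _ => ENNReal.mul_ne_top ENNReal.ofReal_ne_top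
      (ENNReal.sum_lt_top.mpr fun j _ => ENNReal.ofReal_lt_top).ne)]
    have h2 : ∀ i, (ENNReal.ofReal (π i) * ∑ j, ENNReal.ofReal (conv M n (n+x-m) i j)).toReal
        = π i * ∑ j, conv M n (n+x-m) i j := by
      intro i
      rw [ENNReal.toReal_mul, ENNReal.toReal_ofReal (hπnn i),
        ENNReal.toReal_sum (fun j _ => ENNReal.ofReal_ne_top),
        Finset.sum_congr rfl (fun j _ => ENNReal.toReal_ofReal (conv_nonneg hMnn n _ i j))]
    rw [Finset.sum_congr rfl fun i _ => h2 i]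
    calc ∑ i, π i * ∑ j, conv M n (n+x-m) i j
        = ∑ i, ∑ j, π i * (π j / π i * conv Λ n (n+x-m) j i) := by
          refine Finset.sum_congr rfl fun i _ => ?_
          rw [Finset.mul_sum]
          exact Finset.sum_congr rfl fun j _ => by
            rw [conv_tilde Λ π hπne n (n+x-m) i j]
      _ = ∑ j, ∑ i, π i * (π j / π i * conv Λ n (n+x-m) j i) := Finset.sum_comm
      _ = ∑ j, ∑ i, π j * conv Λ n (n+x-m) j i := by
          refine Finset.sum_congr rfl fun j _ => Finset.sum_congr rfl fun i _ => ?_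
          have hι : π i ≠ 0 := hπne i
          field_simp
      _ = ∑ i, ∑ j, π i * conv Λ n (n+x-m) i j := rfl
  have hBkval : ∀ k ∈ Finset.Icc m (n-1), (eprob M π n (fun _J C =>
        (∀ l, l < k → (l:ℤ) - S C l < (m:ℤ)) ∧ ((m:ℤ) ≤ (k:ℤ) - S C k)
          ∧ S C n = n + x - m)).toReal
      = ∑ i, ∑ j, π i * (conv Λ (n-k) (n+x-k) * Vmat Λ π k m) i j := by
    intro k hk
    rw [Finset.mem_Icc] at hk
    obtain ⟨r, rfl⟩ : ∃ r, n = k + r := ⟨n - k, by omega⟩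
    have ekr1 : k + r - k = r := by omega
    have ekr2 : k + r + x - k = r + x := by omega
    rw [ekr1, ekr2]
    rw [term_eval M π m x k r hm hk.1]
    rw [ENNReal.toReal_sum (fun j _ =>
      ENNReal.mul_ne_top (eprob_ne_top hMnn hMs) (eprob_ne_top hMnn hMs))]
    have hb : ∀ j, (eprob M (delta j) r (fun _ C => (∑ t, C t) = r + x)).toReal
        = ∑ l, conv M r (r+x) j l := by
      intro j
      rw [eprob_sum_conv M hMnn r (r+x) j,
        ENNReal.toReal_sum (fun l _ => ENNReal.ofReal_ne_top),
        Finset.sum_congr rfl fun l _ => ENNReal.toReal_ofReal (conv_nonneg hMnn _ _ _ _)]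
    have ha : ∀ j, (eprob M π k (fun J C =>
          ((∀ l, l < k → (l:ℤ) - S C l < (m:ℤ)) ∧ (m:ℤ) ≤ (k:ℤ) - S C k)
            ∧ J (Fin.last k) = j)).toReal
        = ∑ i, π i * hitM M k m i j := by
      intro j
      have h1 : eprob M π k (fun J C =>
            ((∀ l, l < k → (l:ℤ) - S C l < (m:ℤ)) ∧ (m:ℤ) ≤ (k:ℤ) - S C k)
              ∧ J (Fin.last k) = j)
          = eprob M π k (fun J C =>
            (∀ l, l < k → (l:ℤ) - S C l < (m:ℤ))
              ∧ ((m:ℤ) ≤ (k:ℤ) - S C k ∧ J (Fin.last k) = j)) :=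
        eprob_congr fun J C => and_assoc
      rw [h1, eprob_linear hπnn, ENNReal.toReal_sum (fun i _ =>
        ENNReal.mul_ne_top ENNReal.ofReal_ne_top (eprob_ne_top hMnn hMs))]
      refine Finset.sum_congr rfl fun i _ => ?_
      rw [ENNReal.toReal_mul, ENNReal.toReal_ofReal (hπnn i)]
      congr 1
      rw [← prob_eq_toReal hMnn (hδnn i) k _]
      rfl
    rw [Finset.sum_congr rfl (fun j _ => by rw [ENNReal.toReal_mul, ha j, hb j])]
    have hRH : ∀ i j, (conv Λ r (r+x) * Vmat Λ π k m) i j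
        = ∑ l, conv Λ r (r+x) i l * (π j / π l * hitM M k m j l) := by
      intro i j
      rw [Matrix.mul_apply]
      rfl
    calc ∑ j, (∑ i, π i * hitM M k m i j) * (∑ l, conv M r (r+x) j l)
        = ∑ j, ∑ i, ∑ l, π i * hitM M k m i j * (π l / π j * conv Λ r (r+x) l j) := by
          refine Finset.sum_congr rfl fun j _ => ?_
          rw [Finset.sum_mul]
          refine Finset.sum_congr rfl fun i _ => ?_
          rw [Finset.mul_sum]
          refine Finset.sum_congr rfl fun l _ => ?_
          rw [conv_tilde Λ π hπne r (r+x) j l]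
      _ = ∑ j, ∑ l, ∑ i, π i * hitM M k m i j * (π l / π j * conv Λ r (r+x) l j) :=
          Finset.sum_congr rfl fun j _ => Finset.sum_comm
      _ = ∑ l, ∑ j, ∑ i, π i * hitM M k m i j * (π l / π j * conv Λ r (r+x) l j) :=
          Finset.sum_comm
      _ = ∑ l, ∑ i, ∑ j, π i * hitM M k m i j * (π l / π j * conv Λ r (r+x) l j) :=
          Finset.sum_congr rfl fun l _ => Finset.sum_comm
      _ = ∑ i, ∑ j, π i * (conv Λ r (r+x) * Vmat Λ π k m) i j := by
          refine Finset.sum_congr rfl fun a _ => Finset.sum_congr rfl fun b _ => ?_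
          rw [hRH a b, Finset.mul_sum]
          refine Finset.sum_congr rfl fun l _ => ?_
          ring
  have hcomb := congrArg ENNReal.toReal hpart
  rw [ENNReal.toReal_add (eprob_ne_top hMnn hMs)
      ((ENNReal.sum_lt_top.mpr fun k _ => (eprob_ne_top hMnn hMs).lt_top).ne),
    ENNReal.toReal_sum (fun k _ => eprob_ne_top hMnn hMs), hS,
    Finset.sum_congr rfl hBkval] at hcomb
  linarith [hcomb]

end CMB
end
end
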